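/- Let D_m = 4πe^γ (γ the Euler–Mascheroni constant). Assume that for all but finitely many number fields K one has |Δ_K|^{1/[K:ℚ]} ≥ D_m - ε for every ε > 0 (Odlyzko's bound), and assume that for a fixed s = σ + iτ with σ < 0 the inequality Γ_m(s) · D_m^{1/2 - σ} / ζ(1-σ) > 1 holds. Then for every B > 0 the set of isomorphism classes of number fields K with |ζ_K(s)| ≤ B is finite. -/

import Mathlib

open NumberField

/-- Number fields realized as finite-dimensional intermediate fields of `ℂ/ℚ`
(every isomorphism class of number fields arises this way, each finitely often). -/
abbrev NumberFieldIn : Type := {F : IntermediateField ℚ ℂ // FiniteDimensional ℚ F}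

noncomputable instance (F : NumberFieldIn) : NumberField F.1 := by
  haveI := F.2
  exact ⟨⟩

/-- `Γ_ℝ(s) = π^{-s/2} Γ(s/2)`. -/
noncomputable def GammaR (s : ℂ) : ℂ := (Real.pi : ℂ) ^ (-s / 2) * Complex.Gamma (s / 2)

/-- `Γ_ℂ(s) = 2 (2π)^{-s} Γ(s)`. -/
noncomputable def GammaC (s : ℂ) : ℂ := 2 * (2 * Real.pi : ℂ) ^ (-s) * Complex.Gamma s

/-- `Γ_m(s) = min {|Γ_ℝ(1-s)/Γ_ℝ(s)|, |Γ_ℂ(1-s)/Γ_ℂ(s)|^{1/2}}`. -/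
noncomputable def GammaMin (s : ℂ) : ℝ :=
  min ‖GammaR (1 - s) / GammaR s‖
    (Real.sqrt ‖GammaC (1 - s) / GammaC s‖)

/-- The Riemann zeta function at a real argument, as a real series. -/
noncomputable def riemannZetaReal (σ : ℝ) : ℝ :=
  ∑' n : ℕ, ((n : ℝ) + 1) ^ (-σ)

/-- The Odlyzko constant `D_m = 4πe^γ`. -/
noncomputable def Dm : ℝ := 4 * Real.pi * Real.exp Real.eulerMascheroniConstant

/-- Northcott property to the left of the critical strip: let `s = σ + iτ` with
`σ < 0`, and let `Z F` be the (analytically continued) Dedekind zeta function of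
the number field `F`, assumed to satisfy the functional equation and the lower
bound `|ζ_F(1-s)| ≥ ζ(1-σ)^{-[F:ℚ]}`.  Assume Odlyzko's discriminant bound and
the Minkowski-type finiteness of fields of bounded degree and discriminant.  If
`Γ_m(s) · D_m^{1/2-σ} / ζ(1-σ) > 1`, then for every `B > 0` the set of number
fields `F` with `|ζ_F(s)| ≤ B` is finite. -/
theorem northcott_of_gamma_condition (σ τ : ℝ) (hσ : σ < 0)
    (Z : NumberFieldIn → ℂ → ℂ)
    (hfe : ∀ F : NumberFieldIn, ∀ z : ℂ,
      Z F z = Z F (1 - z) *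
        (GammaR (1 - z) ^ (NumberField.InfinitePlace.nrRealPlaces F.1) *
          GammaC (1 - z) ^ (NumberField.InfinitePlace.nrComplexPlaces F.1)) /
        (GammaR z ^ (NumberField.InfinitePlace.nrRealPlaces F.1) *
          GammaC z ^ (NumberField.InfinitePlace.nrComplexPlaces F.1)) *
        (Complex.ofReal |(NumberField.discr F.1 : ℝ)| ^ ((1 : ℂ) / 2 - z)))
    (hlow : ∀ F : NumberFieldIn,
      1 / riemannZetaReal (1 - σ) ^ (Module.finrank ℚ F.1) ≤
        ‖Z F (1 - (σ + τ * Complex.I))‖)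
    (hmink : ∀ n : ℕ, ∀ C : ℝ,
      {F : NumberFieldIn | Module.finrank ℚ F.1 = n ∧
        |(NumberField.discr F.1 : ℝ)| ≤ C}.Finite)
    (hodl : ∀ ε : ℝ, 0 < ε →
      {F : NumberFieldIn |
        |(NumberField.discr F.1 : ℝ)| ^ ((Module.finrank ℚ F.1 : ℝ)⁻¹) < Dm - ε}.Finite)
    (hcond : 1 < GammaMin (σ + τ * Complex.I) * Dm ^ ((1 : ℝ) / 2 - σ) /
        riemannZetaReal (1 - σ)) :
    ∀ B : ℝ, 0 < B →
      {F : NumberFieldIn |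
        ‖Z F (σ + τ * Complex.I)‖ ≤ B}.Finite := by

  intro B hB
  set s : ℂ := σ + τ * Complex.I with hs
  set ζ : ℝ := riemannZetaReal (1 - σ) with hζdef
  set p : ℝ := (1 : ℝ) / 2 - σ with hpdef
  have hp : 0 < p := by rw [hpdef]; linarith
  have hDm : 0 < Dm := by
    unfold Dm; positivity
  -- positivity of zeta value
  have hsum : Summable (fun n : ℕ => ((n : ℝ) + 1) ^ (-(1 - σ))) := by
    have h0 : Summable (fun n : ℕ => (n : ℝ) ^ (-(1 - σ))) :=
      Real.summable_nat_rpow.mpr (by linarith)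
    have h2 := (summable_nat_add_iff 1).mpr h0
    simpa using h2
  have hζ : 0 < ζ := by
    rw [hζdef]
    exact Summable.tsum_pos hsum (fun n => Real.rpow_nonneg (by positivity) _) 0 (by positivity)
  set g : ℝ := GammaMin s with hgdef
  have key0 : ζ < g * Dm ^ p := by
    rw [hζdef]
    have := (one_lt_div hζ).mp hcond
    rwa [hζdef] at this
  have hDmp : 0 < Dm ^ p := Real.rpow_pos_of_pos hDm p
  have hg : 0 < g := by nlinarith
  -- choice of epsilon
  have hζg : ζ / g < Dm ^ p := (div_lt_iff₀ hg).mpr (by nlinarith)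
  set A : ℝ := (ζ / g) ^ p⁻¹ with hAdef
  have hζgpos : 0 < ζ / g := div_pos hζ hg
  have hApos : 0 < A := Real.rpow_pos_of_pos hζgpos _
  have hAp : A ^ p = ζ / g := Real.rpow_inv_rpow hζgpos.le hp.ne'
  have hADm : A < Dm := by
    by_contra h
    push_neg at h
    have h2 : Dm ^ p ≤ A ^ p := Real.rpow_le_rpow hDm.le h hp.le
    rw [hAp] at h2; linarith
  set ε : ℝ := (Dm - A) / 2 with hεdef
  have hεpos : 0 < ε := by rw [hεdef]; linarith
  have hAD' : A < Dm - ε := by rw [hεdef]; linarith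
  have hD'pos : 0 < Dm - ε := lt_trans hApos hAD'
  set c : ℝ := g * (Dm - ε) ^ p / ζ with hcdef
  have hc : 1 < c := by
    have h2 : A ^ p < (Dm - ε) ^ p := Real.rpow_lt_rpow hApos.le hAD' hp
    rw [hAp] at h2
    rw [hcdef, lt_div_iff₀ hζ, one_mul]
    have := (div_lt_iff₀ hg).mp h2
    linarith
  obtain ⟨N, hN⟩ : ∃ N : ℕ, B < c ^ N := pow_unbounded_of_one_lt B hc
  set C : ℕ → ℝ := fun n => (B * (ζ / g) ^ n) ^ p⁻¹ with hCdef
  -- the finite covering set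
  have hfin : ({F : NumberFieldIn |
        |(NumberField.discr F.1 : ℝ)| ^ ((Module.finrank ℚ F.1 : ℝ)⁻¹) < Dm - ε} ∪
      ⋃ n ∈ Finset.range (N + 1),
        {F : NumberFieldIn | Module.finrank ℚ F.1 = n ∧
          |(NumberField.discr F.1 : ℝ)| ≤ C n}).Finite := by
    refine (hodl ε hεpos).union ?_
    exact Set.Finite.biUnion (Finset.range (N + 1)).finite_toSet (fun n _ => hmink n (C n))
  refine hfin.subset ?_
  rintro F hF
  simp only [Set.mem_setOf_eq] at hF
  -- notation for this field
  set n : ℕ := Module.finrank ℚ F.1 with hndef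
  set r1 : ℕ := NumberField.InfinitePlace.nrRealPlaces F.1 with hr1def
  set r2 : ℕ := NumberField.InfinitePlace.nrComplexPlaces F.1 with hr2def
  set Δr : ℝ := |(NumberField.discr F.1 : ℝ)| with hΔdef
  have hnpos : 0 < n := Module.finrank_pos
  have hΔpos : 0 < Δr := by
    rw [hΔdef]
    exact abs_pos.mpr (by exact_mod_cast NumberField.discr_ne_zero F.1)
  have hrank : r1 + 2 * r2 = n :=
    NumberField.InfinitePlace.card_add_two_mul_card_eq_rank F.1
  set aR : ℝ := ‖GammaR (1 - s) / GammaR s‖ with haRdef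
  set aC : ℝ := ‖GammaC (1 - s) / GammaC s‖ with haCdef
  have hgaR : g ≤ aR := min_le_left _ _
  have hgsq : g ≤ Real.sqrt aC := min_le_right _ _
  have haCnn : (0 : ℝ) ≤ aC := norm_nonneg _
  have hgb : g ^ 2 ≤ aC := by
    have := pow_le_pow_left₀ hg.le hgsq 2
    rwa [Real.sq_sqrt haCnn] at this
  -- |disc ^ (1/2 - s)| = Δr ^ p
  have hre : ((1 : ℂ) / 2 - s).re = p := by
    rw [hs, hpdef]
    simp
  have hT : ‖(Complex.ofReal Δr) ^ ((1 : ℂ) / 2 - s)‖ = Δr ^ p := by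
    rw [Complex.norm_cpow_eq_rpow_re_of_pos hΔpos, hre]
  -- absolute value of the functional equation
  have h1 : ‖Z F s‖ =
      ‖Z F (1 - s)‖ * (aR ^ r1 * aC ^ r2) * Δr ^ p := by
    rw [hfe F s]
    simp only [norm_mul, norm_div, norm_pow]
    rw [← hΔdef, hT, haRdef, haCdef, norm_div, norm_div, div_pow, div_pow]
    ring
  -- lower bound on the gamma factor
  have hprod : g ^ n ≤ aR ^ r1 * aC ^ r2 := by
    have hh1 : g ^ r1 ≤ aR ^ r1 := pow_le_pow_left₀ hg.le hgaR r1
    have hh2 : (g ^ 2) ^ r2 ≤ aC ^ r2 := pow_le_pow_left₀ (by positivity) hgb r2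
    calc g ^ n = g ^ (r1 + 2 * r2) := by rw [hrank]
      _ = g ^ r1 * (g ^ 2) ^ r2 := by rw [pow_add, pow_mul]
      _ ≤ aR ^ r1 * aC ^ r2 := mul_le_mul hh1 hh2 (pow_nonneg (sq_nonneg g) r2)
          (pow_nonneg (le_trans hg.le hgaR) r1)
  -- the key bound
  have hζn : (0 : ℝ) < ζ ^ n := pow_pos hζ n
  have key : g ^ n * Δr ^ p / ζ ^ n ≤ B := by
    have hlowF := hlow F
    rw [← hndef] at hlowF
    have hstep : (1 / ζ ^ n) * (g ^ n * Δr ^ p) ≤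
        ‖Z F (1 - s)‖ * ((aR ^ r1 * aC ^ r2) * Δr ^ p) := by
      refine mul_le_mul hlowF ?_
        (mul_nonneg (pow_nonneg hg.le n) (Real.rpow_nonneg hΔpos.le p))
        (norm_nonneg _)
      exact mul_le_mul_of_nonneg_right hprod (Real.rpow_nonneg hΔpos.le p)
    have heq : ‖Z F (1 - s)‖ * ((aR ^ r1 * aC ^ r2) * Δr ^ p) =
        ‖Z F s‖ := by rw [h1]; ring
    rw [heq] at hstep
    calc g ^ n * Δr ^ p / ζ ^ n = (1 / ζ ^ n) * (g ^ n * Δr ^ p) := by ring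
      _ ≤ ‖Z F s‖ := hstep
      _ ≤ B := hF
  by_cases hFodl : |(NumberField.discr F.1 : ℝ)| ^ ((Module.finrank ℚ F.1 : ℝ)⁻¹) < Dm - ε
  · exact Or.inl hFodl
  · right
    push_neg at hFodl
    rw [← hΔdef, ← hndef] at hFodl
    have hΔge : (Dm - ε) ^ n ≤ Δr := by
      calc (Dm - ε) ^ n ≤ (Δr ^ ((n : ℝ)⁻¹)) ^ n := pow_le_pow_left₀ hD'pos.le hFodl n
        _ = Δr := Real.rpow_inv_natCast_pow hΔpos.le hnpos.ne'
    -- degree is bounded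
    have hpows : ((Dm - ε) ^ p) ^ n = ((Dm - ε) ^ n) ^ p := by
      rw [← Real.rpow_natCast ((Dm - ε) ^ p) n, ← Real.rpow_natCast (Dm - ε) n,
        ← Real.rpow_mul hD'pos.le, ← Real.rpow_mul hD'pos.le, mul_comm]
    have hcn : c ^ n ≤ B := by
      have hDp : ((Dm - ε) ^ n) ^ p ≤ Δr ^ p :=
        Real.rpow_le_rpow (pow_nonneg hD'pos.le n) hΔge hp.le
      calc c ^ n = g ^ n * ((Dm - ε) ^ n) ^ p / ζ ^ n := by
            rw [hcdef, div_pow, mul_pow, hpows]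
        _ ≤ g ^ n * Δr ^ p / ζ ^ n := by
            apply div_le_div_of_nonneg_right ?_ hζn.le
            exact mul_le_mul_of_nonneg_left hDp (pow_nonneg hg.le n)
        _ ≤ B := key
    have hnN : n < N + 1 := by
      have : c ^ n < c ^ N := lt_of_le_of_lt hcn hN
      exact Nat.lt_succ_of_lt ((pow_lt_pow_iff_right₀ hc).mp this)
    -- discriminant is bounded
    have hΔC : Δr ≤ C n := by
      have h2 : Δr ^ p ≤ B * (ζ / g) ^ n := by
        rw [div_le_iff₀ hζn] at key
        rw [div_pow, ← mul_div_assoc, le_div_iff₀ (pow_pos hg n)]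
        calc Δr ^ p * g ^ n = g ^ n * Δr ^ p := mul_comm _ _
          _ ≤ B * ζ ^ n := key
      have h3 : (Δr ^ p) ^ p⁻¹ ≤ (B * (ζ / g) ^ n) ^ p⁻¹ :=
        Real.rpow_le_rpow (Real.rpow_nonneg hΔpos.le p) h2 (inv_nonneg.mpr hp.le)
      rwa [Real.rpow_rpow_inv hΔpos.le hp.ne'] at h3
    simp only [Set.mem_iUnion, Set.mem_setOf_eq]
    exact ⟨n, Finset.mem_range.mpr hnN, hndef.symm, hΔC⟩
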